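/- For every b > 0 and n ∈ ℕ, the set E_{b,n} = {u ∈ E_b : |u|_b ≤ n} is nowhere dense in the metric space (F, d), i.e. its closure has empty interior. -/

import Mathlib

noncomputable section

abbrev Vc : Type := EuclideanSpace ℂ (Fin 2)

lemma pow_toReal_eq_sq (x : ℝ) : x ^ (2:ENNReal).toReal = x ^ 2 := by
  have : (2:ENNReal).toReal = ((2:ℕ):ℝ) := by simp
  rw [this, Real.rpow_natCast]

lemma minkowski_tsum (F G : ℤ × ℤ → Vc) (hF : Summable fun k => ‖F k‖ ^ 2)
    (hG : Summable fun k => ‖G k‖ ^ 2) :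
    Real.sqrt (∑' k, ‖F k + G k‖ ^ 2) ≤
      Real.sqrt (∑' k, ‖F k‖ ^ 2) + Real.sqrt (∑' k, ‖G k‖ ^ 2) := by
  have hFp : Memℓp F 2 := memℓp_gen (by
    refine hF.congr fun k => ?_
    rw [pow_toReal_eq_sq])
  have hGp : Memℓp G 2 := memℓp_gen (by
    refine hG.congr fun k => ?_
    rw [pow_toReal_eq_sq])
  have hnorm : ∀ (H : lp (fun _ : ℤ × ℤ => Vc) 2),
      ‖H‖ = Real.sqrt (∑' k, ‖H.1 k‖ ^ 2) := by
    intro H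
    rw [lp.norm_eq_tsum_rpow (by norm_num) H, Real.sqrt_eq_rpow]
    norm_num [pow_toReal_eq_sq]
  have tri := norm_add_le (⟨F, hFp⟩ : lp (fun _ : ℤ × ℤ => Vc) 2) ⟨G, hGp⟩
  rw [hnorm, hnorm, hnorm] at tri
  calc Real.sqrt (∑' k, ‖F k + G k‖ ^ 2)
      = Real.sqrt (∑' k, ‖((⟨F, hFp⟩ : lp (fun _ : ℤ × ℤ => Vc) 2)
          + ⟨G, hGp⟩).1 k‖ ^ 2) := rfl
    _ ≤ _ := tri


/-- Euclidean norm of a lattice point `k ∈ ℤ²`. -/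
def knorm (k : ℤ × ℤ) : ℝ := Real.sqrt ((k.1 : ℝ) ^ 2 + (k.2 : ℝ) ^ 2)

/-- The reality condition `û(-k) = conj (û(k))`. -/
def IsRealCond (u : ℤ × ℤ → Vc) : Prop :=
  ∀ k : ℤ × ℤ, ∀ i : Fin 2, u (-k) i = starRingEnd ℂ (u k i)

/-- Divergence-free condition `k ⬝ û(k) = 0`. -/
def DivFree (u : ℤ × ℤ → Vc) : Prop :=
  ∀ k : ℤ × ℤ, (k.1 : ℂ) * u k 0 + (k.2 : ℂ) * u k 1 = 0

/-- Membership in the Fourier model of the phase space `H`. -/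
def InH (u : ℤ × ℤ → Vc) : Prop := u 0 = 0 ∧ IsRealCond u ∧ DivFree u

/-- `|A^{α/2} u|²  =  L² Σ_{k≠0} (κ₀|k|)^{2α} |û(k)|²` for natural `α`. -/
def sqA (L κ₀ : ℝ) (u : ℤ × ℤ → Vc) (α : ℕ) : ℝ :=
  L ^ 2 * ∑' k : ℤ × ℤ, (κ₀ * knorm k) ^ (2 * α) * ‖u k‖ ^ 2

/-- Finiteness of `|A^{α/2}u|` for natural `α`. -/
def SummableA (κ₀ : ℝ) (u : ℤ × ℤ → Vc) (α : ℕ) : Prop :=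
  Summable fun k : ℤ × ℤ => (κ₀ * knorm k) ^ (2 * α) * ‖u k‖ ^ 2

/-- The class `C(σ)`. -/
def InC (L κ₀ ν σ : ℝ) (u : ℤ × ℤ → Vc) : Prop :=
  (∀ α : ℕ, SummableA κ₀ u α) ∧
  ∃ c₀ : ℝ, ∀ α : ℕ,
    sqA L κ₀ u α ≤ c₀ * Real.exp (σ * (α : ℝ) ^ 2) * ν ^ 2 * κ₀ ^ (2 * α)

/-- The summand of `|u|_b²`. -/
def ebTerm (b : ℝ) (u : ℤ × ℤ → Vc) (k : ℤ × ℤ) : ℝ :=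
  Real.exp (2 * b * (Real.log (knorm k + Real.exp 1)) ^ 2) * ‖u k‖ ^ 2

/-- `|u|_b² = L² Σ_{k≠0} e^{2b(ln(|k|+e))²} |û(k)|²`. -/
def ebSq (L b : ℝ) (u : ℤ × ℤ → Vc) : ℝ := L ^ 2 * ∑' k : ℤ × ℤ, ebTerm b u k

/-- The Fourier model of `F = C^∞ ∩ H`: elements of `H` with `|A^{α/2}u| < ∞`
for every `α ∈ ℕ`. -/
def Fs (L κ₀ : ℝ) : Type := {u : ℤ × ℤ → Vc // InH u ∧ ∀ α : ℕ, SummableA κ₀ u α}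

/-- `|A^{α/2} w| = (L² Σ_{k≠0} (κ₀|k|)^{2α} |ŵ(k)|²)^{1/2}`. -/
def nA (L κ₀ : ℝ) (w : ℤ × ℤ → Vc) (α : ℕ) : ℝ := Real.sqrt (sqA L κ₀ w α)

/-- The Fréchet metric
`d(u,v) = Σ_{α=1}^∞ 2^{-α} |A^{α/2}(u-v)| / (1 + |A^{α/2}(u-v)|)`. -/
def dF (L κ₀ : ℝ) (u v : Fs L κ₀) : ℝ :=
  ∑' α : ℕ, (1 / 2 ^ (α + 1)) *
    (nA L κ₀ (fun k => u.1 k - v.1 k) (α + 1) /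
      (1 + nA L κ₀ (fun k => u.1 k - v.1 k) (α + 1)))

/-- The topology on `(F, d)` generated by the open balls of the metric `d`. -/
noncomputable instance topF (L κ₀ : ℝ) : TopologicalSpace (Fs L κ₀) :=
  TopologicalSpace.generateFrom
    {B | ∃ x : Fs L κ₀, ∃ r : ℝ, B = {y : Fs L κ₀ | dF L κ₀ x y < r}}

/-- The set `E_{b,n} = {u ∈ E_b : |u|_b ≤ n}`, viewed as a subset of `F`. -/
def EbnSet (L κ₀ b : ℝ) (n : ℕ) : Set (Fs L κ₀) :=
  {u : Fs L κ₀ | Summable (ebTerm b u.1) ∧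
    Real.sqrt (L ^ 2 * ∑' k : ℤ × ℤ, ebTerm b u.1 k) ≤ n}


lemma knorm_nonneg (k : ℤ × ℤ) : 0 ≤ knorm k := Real.sqrt_nonneg _

lemma wt_nonneg {κ₀ : ℝ} (hκ : 0 ≤ κ₀) (k : ℤ × ℤ) (α : ℕ) :
    0 ≤ (κ₀ * knorm k) ^ α := pow_nonneg (mul_nonneg hκ (knorm_nonneg k)) _

lemma term_eq {κ₀ : ℝ} (hκ : 0 ≤ κ₀) (α : ℕ) (k : ℤ × ℤ) (x : Vc) :
    (κ₀ * knorm k) ^ (2 * α) * ‖x‖ ^ 2 = ‖((κ₀ * knorm k) ^ α : ℝ) • x‖ ^ 2 := by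
  rw [norm_smul, Real.norm_eq_abs, abs_of_nonneg (wt_nonneg hκ k α),
    mul_pow ((κ₀ * knorm k) ^ α) ‖x‖ 2, ← pow_mul, mul_comm α 2]

lemma nA_nonneg (L κ₀ : ℝ) (w : ℤ × ℤ → Vc) (α : ℕ) : 0 ≤ nA L κ₀ w α :=
  Real.sqrt_nonneg _

lemma nA_add_le {L κ₀ : ℝ} (hL : 0 ≤ L) (hκ : 0 ≤ κ₀) (f g : ℤ × ℤ → Vc) (α : ℕ)
    (hf : SummableA κ₀ f α) (hg : SummableA κ₀ g α) :
    nA L κ₀ (fun k => f k + g k) α ≤ nA L κ₀ f α + nA L κ₀ g α := by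
  have key : ∀ (x : ℤ × ℤ → Vc),
      sqA L κ₀ x α = L ^ 2 * ∑' k, ‖((κ₀ * knorm k) ^ α : ℝ) • x k‖ ^ 2 := by
    intro x
    exact congrArg (L ^ 2 * ·) (tsum_congr fun k => term_eq hκ α k (x k))
  have hF : Summable fun k => ‖((κ₀ * knorm k) ^ α : ℝ) • f k‖ ^ 2 :=
    hf.congr fun k => term_eq hκ α k (f k)
  have hG : Summable fun k => ‖((κ₀ * knorm k) ^ α : ℝ) • g k‖ ^ 2 :=
    hg.congr fun k => term_eq hκ α k (g k)
  have hmink := minkowski_tsum _ _ hF hG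
  have hL2 : ∀ (T : ℝ), Real.sqrt (L ^ 2 * T) = L * Real.sqrt T := by
    intro T
    rw [Real.sqrt_mul (sq_nonneg L), Real.sqrt_sq hL]
  unfold nA
  rw [key, key, key, hL2, hL2, hL2, ← mul_add]
  refine mul_le_mul_of_nonneg_left ?_ hL
  calc Real.sqrt (∑' k, ‖((κ₀ * knorm k) ^ α : ℝ) • (f k + g k)‖ ^ 2)
      = Real.sqrt (∑' k, ‖((κ₀ * knorm k) ^ α : ℝ) • f k
          + ((κ₀ * knorm k) ^ α : ℝ) • g k‖ ^ 2) := by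
        congr 1; exact tsum_congr fun k => by rw [smul_add]
    _ ≤ _ := hmink

lemma SummableA_sub {κ₀ : ℝ} (hκ : 0 ≤ κ₀) {u v : ℤ × ℤ → Vc} {α : ℕ}
    (hu : SummableA κ₀ u α) (hv : SummableA κ₀ v α) :
    SummableA κ₀ (fun k => u k - v k) α := by
  have hsum : Summable (fun k : ℤ × ℤ =>
      2 * ((κ₀ * knorm k) ^ (2 * α) * ‖u k‖ ^ 2)
        + 2 * ((κ₀ * knorm k) ^ (2 * α) * ‖v k‖ ^ 2)) :=
    (hu.mul_left 2).add (hv.mul_left 2)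
  refine Summable.of_nonneg_of_le
    (fun k => mul_nonneg (wt_nonneg hκ k (2 * α)) (sq_nonneg _)) (fun k => ?_) hsum
  have h1 : ‖u k - v k‖ ^ 2 ≤ 2 * ‖u k‖ ^ 2 + 2 * ‖v k‖ ^ 2 := by
    have h2 := norm_sub_le (u k) (v k)
    have h3 : ‖u k - v k‖ ^ 2 ≤ (‖u k‖ + ‖v k‖) ^ 2 :=
      pow_le_pow_left₀ (norm_nonneg _) h2 2
    nlinarith [sq_nonneg (‖u k‖ - ‖v k‖)]
  calc (κ₀ * knorm k) ^ (2 * α) * ‖u k - v k‖ ^ 2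
      ≤ (κ₀ * knorm k) ^ (2 * α) * (2 * ‖u k‖ ^ 2 + 2 * ‖v k‖ ^ 2) :=
        mul_le_mul_of_nonneg_left h1 (wt_nonneg hκ k (2 * α))
    _ = 2 * ((κ₀ * knorm k) ^ (2 * α) * ‖u k‖ ^ 2)
        + 2 * ((κ₀ * knorm k) ^ (2 * α) * ‖v k‖ ^ 2) := by ring

lemma fdiv_nonneg' {t : ℝ} (ht : 0 ≤ t) : 0 ≤ t / (1 + t) :=
  div_nonneg ht (by linarith)

lemma fdiv_le_one {t : ℝ} (ht : 0 ≤ t) : t / (1 + t) ≤ 1 := by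
  rw [div_le_one (by linarith)]; linarith

lemma fdiv_mono {s t : ℝ} (hs : 0 ≤ s) (hst : s ≤ t) :
    s / (1 + s) ≤ t / (1 + t) := by
  rw [div_le_div_iff₀ (by linarith) (by linarith)]; nlinarith

lemma fdiv_subadd {a b c : ℝ} (ha : 0 ≤ a) (hb : 0 ≤ b) (hc : 0 ≤ c)
    (h : a ≤ b + c) : a / (1 + a) ≤ b / (1 + b) + c / (1 + c) := by
  calc a / (1 + a) ≤ (b + c) / (1 + (b + c)) := fdiv_mono ha h
    _ = b / (1 + (b + c)) + c / (1 + (b + c)) := by rw [add_div]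
    _ ≤ b / (1 + b) + c / (1 + c) := by
        gcongr <;> linarith

lemma summable_halfpow : Summable (fun α : ℕ => (1 / 2 ^ (α + 1) : ℝ)) := by
  have h := summable_geometric_two.mul_left (1 / 2 : ℝ)
  refine h.congr fun α => ?_
  rw [pow_succ]
  simp only [one_div, mul_inv, inv_pow]
  ring

lemma tsum_halfpow : (∑' α : ℕ, (1 / 2 ^ (α + 1) : ℝ)) = 1 := by
  calc (∑' α : ℕ, (1 / 2 ^ (α + 1) : ℝ)) = ∑' n : ℕ, (1:ℝ) / 2 / 2 ^ n :=
        tsum_congr (fun α => by rw [pow_succ]; ring)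
    _ = 1 := tsum_geometric_two' 1

lemma dF_summable_aux (g : ℕ → ℝ) (hg0 : ∀ α, 0 ≤ g α) (hg1 : ∀ α, g α ≤ 1) :
    Summable (fun α : ℕ => (1 / 2 ^ (α + 1) : ℝ) * g α) := by
  refine Summable.of_nonneg_of_le
    (fun α => mul_nonneg (by positivity) (hg0 α)) (fun α => ?_) summable_halfpow
  exact mul_le_of_le_one_right (by positivity) (hg1 α)

lemma dF_summable (L κ₀ : ℝ) (x y : Fs L κ₀) :
    Summable (fun α : ℕ => (1 / 2 ^ (α + 1)) *
      (nA L κ₀ (fun k => x.1 k - y.1 k) (α + 1) /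
        (1 + nA L κ₀ (fun k => x.1 k - y.1 k) (α + 1))) : ℕ → ℝ) :=
  dF_summable_aux _ (fun α => fdiv_nonneg' (nA_nonneg _ _ _ _))
    (fun α => fdiv_le_one (nA_nonneg _ _ _ _))

lemma dF_nonneg (L κ₀ : ℝ) (x y : Fs L κ₀) : 0 ≤ dF L κ₀ x y :=
  tsum_nonneg fun α => mul_nonneg (by positivity) (fdiv_nonneg' (nA_nonneg _ _ _ _))

lemma dF_self (L κ₀ : ℝ) (x : Fs L κ₀) : dF L κ₀ x x = 0 := by
  unfold dF
  have h : ∀ α : ℕ, nA L κ₀ (fun k => x.1 k - x.1 k) (α + 1) = 0 := by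
    intro α
    have : sqA L κ₀ (fun k => x.1 k - x.1 k) (α + 1) = 0 := by
      unfold sqA
      rw [tsum_congr (fun k => by simp : ∀ k : ℤ × ℤ,
        (κ₀ * knorm k) ^ (2 * (α + 1)) * ‖x.1 k - x.1 k‖ ^ 2 = 0), tsum_zero, mul_zero]
    rw [nA, this, Real.sqrt_zero]
  calc (∑' α : ℕ, (1 / 2 ^ (α + 1)) *
        (nA L κ₀ (fun k => x.1 k - x.1 k) (α + 1) /
          (1 + nA L κ₀ (fun k => x.1 k - x.1 k) (α + 1))) : ℝ)
      = ∑' _ : ℕ, (0:ℝ) := tsum_congr (fun α => by rw [h α]; simp)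
    _ = 0 := tsum_zero

lemma dF_triangle {L κ₀ : ℝ} (hL : 0 ≤ L) (hκ : 0 ≤ κ₀) (x y z : Fs L κ₀) :
    dF L κ₀ x z ≤ dF L κ₀ x y + dF L κ₀ y z := by
  unfold dF
  rw [← Summable.tsum_add (dF_summable L κ₀ x y) (dF_summable L κ₀ y z)]
  refine Summable.tsum_le_tsum (fun α => ?_) (dF_summable L κ₀ x z)
    ((dF_summable L κ₀ x y).add (dF_summable L κ₀ y z))
  have habc : nA L κ₀ (fun k => x.1 k - z.1 k) (α + 1) ≤
      nA L κ₀ (fun k => x.1 k - y.1 k) (α + 1) +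
      nA L κ₀ (fun k => y.1 k - z.1 k) (α + 1) := by
    have he : (fun k => x.1 k - z.1 k) =
        fun k => (x.1 k - y.1 k) + (y.1 k - z.1 k) := funext fun k => by abel
    rw [he]
    exact nA_add_le hL hκ _ _ (α + 1)
      (SummableA_sub hκ (x.2.2 _) (y.2.2 _)) (SummableA_sub hκ (y.2.2 _) (z.2.2 _))
  rw [← mul_add]
  refine mul_le_mul_of_nonneg_left ?_ (by positivity)
  exact fdiv_subadd (nA_nonneg _ _ _ _) (nA_nonneg _ _ _ _) (nA_nonneg _ _ _ _) habc

lemma isOpen_ballF (L κ₀ : ℝ) (x : Fs L κ₀) (r : ℝ) :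
    IsOpen {y : Fs L κ₀ | dF L κ₀ x y < r} :=
  TopologicalSpace.isOpen_generateFrom_of_mem ⟨x, r, rfl⟩

lemma exists_ballF_subset {L κ₀ : ℝ} (hL : 0 ≤ L) (hκ : 0 ≤ κ₀)
    {U : Set (Fs L κ₀)} (hU : IsOpen U) :
    ∀ x ∈ U, ∃ r > 0, {y : Fs L κ₀ | dF L κ₀ x y < r} ⊆ U := by
  have hU' : TopologicalSpace.GenerateOpen
      {B | ∃ x : Fs L κ₀, ∃ r : ℝ, B = {y : Fs L κ₀ | dF L κ₀ x y < r}} U := hU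
  clear hU
  induction hU' with
  | @basic s hs =>
      intro x hx
      obtain ⟨c, r, rfl⟩ := hs
      have hx' : dF L κ₀ c x < r := hx
      refine ⟨r - dF L κ₀ c x, sub_pos.mpr hx', fun z hz => ?_⟩
      have htri := dF_triangle hL hκ c x z
      have hz' : dF L κ₀ x z < r - dF L κ₀ c x := hz
      show dF L κ₀ c z < r
      linarith
  | univ => exact fun x _ => ⟨1, one_pos, fun z _ => trivial⟩
  | inter s t hs ht ihs iht =>
      intro x hx
      obtain ⟨r1, hr1, h1⟩ := ihs x hx.1
      obtain ⟨r2, hr2, h2⟩ := iht x hx.2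
      refine ⟨min r1 r2, lt_min hr1 hr2, fun z hz => ?_⟩
      have hz' : dF L κ₀ x z < min r1 r2 := hz
      exact ⟨h1 (lt_of_lt_of_le hz' (min_le_left _ _)),
        h2 (lt_of_lt_of_le hz' (min_le_right _ _))⟩
  | sUnion S hS ih =>
      intro x hx
      obtain ⟨s, hsS, hxs⟩ := hx
      obtain ⟨r, hr, h⟩ := ih s hsS x hxs
      exact ⟨r, hr, h.trans (Set.subset_sUnion_of_mem hsS)⟩

lemma key_exp_ineq (b a Lg : ℝ) (hb : 0 < b) :
    2 * a * Lg ≤ 2 * a ^ 2 / b + 2 * b * Lg ^ 2 := by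
  have h : 2 * a * Lg * b ≤ 2 * a ^ 2 + 2 * b ^ 2 * Lg ^ 2 := by
    nlinarith [sq_nonneg (a - b * Lg)]
  have h2 : 2 * a * Lg = (2 * a * Lg * b) / b := by field_simp
  rw [h2, div_le_iff₀ hb]
  have hX : 2 * a ^ 2 / b * b = 2 * a ^ 2 := div_mul_cancel₀ _ hb.ne'
  nlinarith [sq_nonneg (a - b * Lg), hX]

lemma weight_le {κ₀ b : ℝ} (hκ : 0 ≤ κ₀) (hb : 0 < b) (α : ℕ) (k : ℤ × ℤ) :
    (κ₀ * knorm k) ^ (2 * α) ≤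
      κ₀ ^ (2 * α) * Real.exp (2 * (α : ℝ) ^ 2 / b) *
        Real.exp (2 * b * (Real.log (knorm k + Real.exp 1)) ^ 2) := by
  set t := knorm k + Real.exp 1 with ht
  have hte : Real.exp 1 ≤ t := le_add_of_nonneg_left (knorm_nonneg k)
  have ht0 : 0 < t := lt_of_lt_of_le (Real.exp_pos 1) hte
  have h1 : knorm k ^ (2 * α) ≤ t ^ (2 * α) :=
    pow_le_pow_left₀ (knorm_nonneg k) (le_add_of_nonneg_right (Real.exp_pos 1).le) _
  have h2 : t ^ (2 * α) = Real.exp (((2 * α : ℕ) : ℝ) * Real.log t) := by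
    rw [Real.exp_nat_mul, Real.exp_log ht0]
  have h3 : ((2 * α : ℕ) : ℝ) * Real.log t ≤
      2 * (α : ℝ) ^ 2 / b + 2 * b * (Real.log t) ^ 2 := by
    push_cast
    have := key_exp_ineq b (α : ℝ) (Real.log t) hb
    linarith
  calc (κ₀ * knorm k) ^ (2 * α) = κ₀ ^ (2 * α) * knorm k ^ (2 * α) := mul_pow _ _ _
    _ ≤ κ₀ ^ (2 * α) * t ^ (2 * α) :=
        mul_le_mul_of_nonneg_left h1 (pow_nonneg hκ _)
    _ = κ₀ ^ (2 * α) * Real.exp (((2 * α : ℕ) : ℝ) * Real.log t) := by rw [h2]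
    _ ≤ κ₀ ^ (2 * α) * (Real.exp (2 * (α : ℝ) ^ 2 / b) *
          Real.exp (2 * b * (Real.log t) ^ 2)) := by
        refine mul_le_mul_of_nonneg_left ?_ (pow_nonneg hκ _)
        rw [← Real.exp_add]
        exact Real.exp_le_exp.mpr h3
    _ = _ := by ring

lemma nA_le_of_mem_Ebn {L κ₀ b : ℝ} (hL : 0 ≤ L) (hκ : 0 ≤ κ₀) (hb : 0 < b) {n : ℕ}
    {w : Fs L κ₀} (hw : w ∈ EbnSet L κ₀ b n) (α : ℕ) :
    nA L κ₀ w.1 α ≤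
      Real.sqrt (κ₀ ^ (2 * α) * Real.exp (2 * (α : ℝ) ^ 2 / b) * (n : ℝ) ^ 2) := by
  obtain ⟨hsum, hle⟩ := hw
  have hEb0 : (0:ℝ) ≤ L ^ 2 * ∑' k, ebTerm b w.1 k :=
    mul_nonneg (sq_nonneg L)
      (tsum_nonneg fun k => mul_nonneg (Real.exp_pos _).le (sq_nonneg _))
  have hEb : L ^ 2 * ∑' k, ebTerm b w.1 k ≤ (n : ℝ) ^ 2 := by
    calc L ^ 2 * ∑' k, ebTerm b w.1 k
        = (Real.sqrt (L ^ 2 * ∑' k, ebTerm b w.1 k)) ^ 2 := (Real.sq_sqrt hEb0).symm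
      _ ≤ (n : ℝ) ^ 2 := pow_le_pow_left₀ (Real.sqrt_nonneg _) hle 2
  have hterm : ∀ k, (κ₀ * knorm k) ^ (2 * α) * ‖w.1 k‖ ^ 2 ≤
      (κ₀ ^ (2 * α) * Real.exp (2 * (α : ℝ) ^ 2 / b)) * ebTerm b w.1 k := by
    intro k
    unfold ebTerm
    calc (κ₀ * knorm k) ^ (2 * α) * ‖w.1 k‖ ^ 2
        ≤ (κ₀ ^ (2 * α) * Real.exp (2 * (α : ℝ) ^ 2 / b) *
            Real.exp (2 * b * (Real.log (knorm k + Real.exp 1)) ^ 2)) * ‖w.1 k‖ ^ 2 :=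
          mul_le_mul_of_nonneg_right (weight_le hκ hb α k) (sq_nonneg _)
      _ = _ := by ring
  have hsqA : sqA L κ₀ w.1 α ≤
      κ₀ ^ (2 * α) * Real.exp (2 * (α : ℝ) ^ 2 / b) * (L ^ 2 * ∑' k, ebTerm b w.1 k) := by
    unfold sqA
    have htsum := Summable.tsum_le_tsum hterm (w.2.2 α) (hsum.mul_left _)
    calc L ^ 2 * ∑' k, (κ₀ * knorm k) ^ (2 * α) * ‖w.1 k‖ ^ 2
        ≤ L ^ 2 * ∑' k, (κ₀ ^ (2 * α) * Real.exp (2 * (α : ℝ) ^ 2 / b)) * ebTerm b w.1 k :=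
          mul_le_mul_of_nonneg_left htsum (sq_nonneg L)
      _ = _ := by rw [tsum_mul_left]; ring
  refine Real.sqrt_le_sqrt ?_
  calc sqA L κ₀ w.1 α ≤ _ := hsqA
    _ ≤ κ₀ ^ (2 * α) * Real.exp (2 * (α : ℝ) ^ 2 / b) * (n : ℝ) ^ 2 :=
        mul_le_mul_of_nonneg_left hEb (by positivity)

def eVec (ε : ℝ) : Vc := WithLp.toLp 2 (fun i : Fin 2 => if i = 1 then (ε : ℂ) else 0)

lemma eVec_norm (ε : ℝ) : ‖eVec ε‖ = |ε| := by
  rw [EuclideanSpace.norm_eq]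
  simp [eVec, Fin.sum_univ_two, Real.sqrt_sq_eq_abs]

def eMode (ε : ℝ) (N : ℕ) : ℤ × ℤ → Vc := fun k =>
  if k = ((N : ℤ), 0) ∨ k = (-(N : ℤ), 0) then eVec ε else 0

lemma eMode_norm (ε : ℝ) (N : ℕ) (k : ℤ × ℤ) :
    ‖eMode ε N k‖ = if k = ((N : ℤ), 0) ∨ k = (-(N : ℤ), 0) then |ε| else 0 := by
  unfold eMode
  split <;> simp [eVec_norm]

lemma knorm_mode (N : ℕ) : knorm ((N : ℤ), 0) = N ∧ knorm (-(N : ℤ), 0) = N := by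
  constructor <;>
  · unfold knorm
    push_cast
    simp [Real.sqrt_sq (Nat.cast_nonneg N : (0:ℝ) ≤ N), neg_sq]

lemma mode_ne (N : ℕ) (hN : 1 ≤ N) : ((N : ℤ), (0:ℤ)) ≠ (-(N : ℤ), 0) := by
  intro h
  have := congrArg Prod.fst h
  simp at this
  omega

/-- `sqA` of any function whose pointwise norms agree with those of `eMode ε N`. -/
lemma sqA_eMode {L κ₀ : ℝ} (ε : ℝ) (N : ℕ) (hN : 1 ≤ N) (β : ℕ)
    (w : ℤ × ℤ → Vc) (hw : ∀ k, ‖w k‖ = ‖eMode ε N k‖) :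
    sqA L κ₀ w β = L ^ 2 * (2 * ((κ₀ * (N : ℝ)) ^ (2 * β) * ε ^ 2)) := by
  unfold sqA
  congr 1
  have hzero : ∀ k ∉ ({((N : ℤ), (0:ℤ)), (-(N : ℤ), (0:ℤ))} : Finset (ℤ × ℤ)),
      (κ₀ * knorm k) ^ (2 * β) * ‖w k‖ ^ 2 = 0 := by
    intro k hk
    simp only [Finset.mem_insert, Finset.mem_singleton] at hk
    push_neg at hk
    rw [hw k, eMode_norm, if_neg (by tauto)]
    simp
  rw [tsum_eq_sum hzero, Finset.sum_pair (mode_ne N hN)]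
  rw [hw _, hw _, eMode_norm, eMode_norm, if_pos (Or.inl rfl), if_pos (Or.inr rfl),
    (knorm_mode N).1, (knorm_mode N).2, sq_abs]
  ring

lemma nA_eMode {L κ₀ : ℝ} (hL : 0 ≤ L) (hκ : 0 ≤ κ₀) (ε : ℝ) (hε : 0 ≤ ε)
    (N : ℕ) (hN : 1 ≤ N) (β : ℕ)
    (w : ℤ × ℤ → Vc) (hw : ∀ k, ‖w k‖ = ‖eMode ε N k‖) :
    nA L κ₀ w β = L * (Real.sqrt 2 * ((κ₀ * (N : ℝ)) ^ β * ε)) := by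
  have hκN : 0 ≤ κ₀ * (N : ℝ) := mul_nonneg hκ (Nat.cast_nonneg N)
  rw [nA, sqA_eMode ε N hN β w hw,
    Real.sqrt_mul (sq_nonneg L), Real.sqrt_sq hL,
    Real.sqrt_mul (by norm_num : (0:ℝ) ≤ 2),
    Real.sqrt_mul (pow_nonneg hκN _), Real.sqrt_sq_eq_abs, abs_of_nonneg hε,
    mul_comm 2 β, pow_mul, Real.sqrt_sq (pow_nonneg hκN _)]

lemma SummableA_eMode {κ₀ : ℝ} (ε : ℝ) (N : ℕ) (β : ℕ) :
    SummableA κ₀ (eMode ε N) β := by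
  refine summable_of_ne_finset_zero
    (s := ({((N : ℤ), (0:ℤ)), (-(N : ℤ), (0:ℤ))} : Finset (ℤ × ℤ))) ?_
  intro k hk
  simp only [Finset.mem_insert, Finset.mem_singleton] at hk
  push_neg at hk
  unfold eMode
  rw [if_neg (by tauto)]
  simp

lemma SummableA_add_finmod {κ₀ : ℝ} {u : ℤ × ℤ → Vc} {α : ℕ}
    (hu : SummableA κ₀ u α) (e : ℤ × ℤ → Vc) (s : Finset (ℤ × ℤ))
    (he : ∀ k ∉ s, e k = 0) : SummableA κ₀ (fun k => u k + e k) α := by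
  have hd : Summable (fun k : ℤ × ℤ =>
      (κ₀ * knorm k) ^ (2 * α) * ‖u k + e k‖ ^ 2
        - (κ₀ * knorm k) ^ (2 * α) * ‖u k‖ ^ 2) := by
    refine summable_of_ne_finset_zero (s := s) ?_
    intro k hk
    rw [he k hk]
    simp
  exact (hu.add hd).congr fun k => by ring

lemma eMode_off {ε : ℝ} {N : ℕ} :
    ∀ k ∉ ({((N : ℤ), (0:ℤ)), (-(N : ℤ), (0:ℤ))} : Finset (ℤ × ℤ)),
      eMode ε N k = 0 := by
  intro k hk
  simp only [Finset.mem_insert, Finset.mem_singleton] at hk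
  push_neg at hk
  unfold eMode
  rw [if_neg (by tauto)]

lemma InH_add_eMode {u : ℤ × ℤ → Vc} (hu : InH u) (ε : ℝ) (N : ℕ) (hN : 1 ≤ N) :
    InH (fun k => u k + eMode ε N k) := by
  refine ⟨?_, ?_, ?_⟩
  · show u 0 + eMode ε N 0 = 0
    have hc : ¬((0 : ℤ × ℤ) = ((N : ℤ), 0) ∨ (0 : ℤ × ℤ) = (-(N : ℤ), 0)) := by
      rintro (h | h) <;> (have := congrArg Prod.fst h; simp at this; omega)
    unfold eMode
    rw [if_neg hc, add_zero, hu.1]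
  · intro k i
    show u (-k) i + eMode ε N (-k) i = starRingEnd ℂ ((u k + eMode ε N k) i)
    have hre : (u k + eMode ε N k) i = u k i + eMode ε N k i := rfl
    rw [hre, map_add, hu.2.1 k i]
    congr 1
    obtain ⟨k1, k2⟩ := k
    have h1 : ((-(k1, k2) = ((N : ℤ), (0:ℤ)) ∨ -(k1, k2) = (-(N : ℤ), (0:ℤ)))) ↔
        ((k1, k2) = ((N : ℤ), (0:ℤ)) ∨ (k1, k2) = (-(N : ℤ), (0:ℤ))) := by
      simp [Prod.ext_iff]
      omega
    unfold eMode
    by_cases hk : ((k1, k2) = ((N : ℤ), (0:ℤ)) ∨ (k1, k2) = (-(N : ℤ), (0:ℤ)))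
    · rw [if_pos (h1.mpr hk), if_pos hk]
      unfold eVec
      by_cases hi : i = 1 <;> simp [hi, Complex.conj_ofReal]
    · rw [if_neg (fun h => hk (h1.mp h)), if_neg hk]
      simp
  · intro k
    show (k.1 : ℂ) * (u k + eMode ε N k) 0 + (k.2 : ℂ) * (u k + eMode ε N k) 1 = 0
    have hr0 : (u k + eMode ε N k) 0 = u k 0 + eMode ε N k 0 := rfl
    have hr1 : (u k + eMode ε N k) 1 = u k 1 + eMode ε N k 1 := rfl
    have he0 : eMode ε N k 0 = 0 := by
      unfold eMode eVec
      split <;> simp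
    have he1 : (k.2 : ℂ) * eMode ε N k 1 = 0 := by
      by_cases hk : (k = ((N : ℤ), (0:ℤ)) ∨ k = (-(N : ℤ), (0:ℤ)))
      · have hk2 : k.2 = 0 := by rcases hk with h | h <;> rw [h]
        rw [hk2]
        simp
      · unfold eMode
        rw [if_neg hk]
        simp
    rw [hr0, hr1, he0]
    have hdiv := hu.2.2 k
    linear_combination hdiv + he1

lemma dF_ge_term (L κ₀ : ℝ) (x v : Fs L κ₀) (A : ℕ) :
    (1 / 2 ^ (A + 1) : ℝ) * (nA L κ₀ (fun k => x.1 k - v.1 k) (A + 1) /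
      (1 + nA L κ₀ (fun k => x.1 k - v.1 k) (A + 1))) ≤ dF L κ₀ x v :=
  Summable.le_tsum (dF_summable L κ₀ x v) A
    (fun j _ => mul_nonneg (by positivity) (fdiv_nonneg' (nA_nonneg _ _ _ _)))

set_option maxHeartbeats 1000000 in
lemma dF_le_head_tail (L κ₀ : ℝ) (x v : Fs L κ₀) (A : ℕ) (c : ℝ) (hc : 0 ≤ c)
    (hhead : ∀ β : ℕ, β + 1 ≤ A → nA L κ₀ (fun k => x.1 k - v.1 k) (β + 1) ≤ c) :
    dF L κ₀ x v ≤ c + (1/2 : ℝ) ^ A := by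
  unfold dF
  have hsum := dF_summable L κ₀ x v
  have hsplit := Summable.sum_add_tsum_nat_add A hsum
  have hhead' : ∑ β ∈ Finset.range A, ((1 / 2 ^ (β + 1)) *
      (nA L κ₀ (fun k => x.1 k - v.1 k) (β + 1) /
        (1 + nA L κ₀ (fun k => x.1 k - v.1 k) (β + 1))) : ℝ) ≤ c := by
    have hterm : ∀ β ∈ Finset.range A, ((1 / 2 ^ (β + 1)) *
        (nA L κ₀ (fun k => x.1 k - v.1 k) (β + 1) /
          (1 + nA L κ₀ (fun k => x.1 k - v.1 k) (β + 1))) : ℝ) ≤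
        (1 / 2 ^ (β + 1)) * c := by
      intro β hβ
      refine mul_le_mul_of_nonneg_left ?_ (by positivity)
      calc nA L κ₀ (fun k => x.1 k - v.1 k) (β + 1) /
            (1 + nA L κ₀ (fun k => x.1 k - v.1 k) (β + 1))
          ≤ nA L κ₀ (fun k => x.1 k - v.1 k) (β + 1) :=
            div_le_self (nA_nonneg _ _ _ _)
              (by linarith [nA_nonneg L κ₀ (fun k => x.1 k - v.1 k) (β + 1)])
        _ ≤ c := hhead β (Finset.mem_range.mp hβ)
    calc ∑ β ∈ Finset.range A, ((1 / 2 ^ (β + 1)) *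
          (nA L κ₀ (fun k => x.1 k - v.1 k) (β + 1) /
            (1 + nA L κ₀ (fun k => x.1 k - v.1 k) (β + 1))) : ℝ)
        ≤ ∑ β ∈ Finset.range A, ((1 / 2 ^ (β + 1)) * c : ℝ) :=
          Finset.sum_le_sum hterm
      _ = (∑ β ∈ Finset.range A, (1 / 2 ^ (β + 1) : ℝ)) * c := by
          rw [← Finset.sum_mul]
      _ ≤ 1 * c := by
          refine mul_le_mul_of_nonneg_right ?_ hc
          calc (∑ β ∈ Finset.range A, (1 / 2 ^ (β + 1) : ℝ))
              ≤ ∑' β : ℕ, (1 / 2 ^ (β + 1) : ℝ) :=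
                Summable.sum_le_tsum _ (fun i _ => by positivity) summable_halfpow
            _ = 1 := tsum_halfpow
      _ = c := one_mul _
  have hgeo : Summable (fun β : ℕ => (1 / 2 ^ (β + A + 1) : ℝ)) :=
    (summable_halfpow.mul_left (1 / 2 ^ A : ℝ)).congr fun β => by
      rw [add_right_comm β A 1, pow_add]
      ring
  have htail : (∑' β : ℕ, ((1 / 2 ^ ((β + A) + 1)) *
      (nA L κ₀ (fun k => x.1 k - v.1 k) ((β + A) + 1) /
        (1 + nA L κ₀ (fun k => x.1 k - v.1 k) ((β + A) + 1))) : ℝ)) ≤ (1/2 : ℝ) ^ A := by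
    calc (∑' β : ℕ, ((1 / 2 ^ ((β + A) + 1)) *
          (nA L κ₀ (fun k => x.1 k - v.1 k) ((β + A) + 1) /
            (1 + nA L κ₀ (fun k => x.1 k - v.1 k) ((β + A) + 1))) : ℝ))
        ≤ ∑' β : ℕ, (1 / 2 ^ (β + A + 1) : ℝ) := by
          refine Summable.tsum_le_tsum (fun β => ?_) ((summable_nat_add_iff A).mpr hsum) hgeo
          exact mul_le_of_le_one_right (by positivity)
            (fdiv_le_one (nA_nonneg _ _ _ _))
      _ = ∑' β : ℕ, ((1 / 2 ^ A : ℝ) * (1 / 2 ^ (β + 1) : ℝ)) := by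
          refine tsum_congr fun β => ?_
          rw [add_right_comm β A 1, pow_add]
          ring
      _ = (1 / 2 ^ A : ℝ) * ∑' β : ℕ, (1 / 2 ^ (β + 1) : ℝ) := tsum_mul_left
      _ = (1/2 : ℝ) ^ A := by rw [tsum_halfpow, mul_one, one_div_pow]
  rw [← hsplit]
  exact add_le_add hhead' htail

set_option maxHeartbeats 1000000 in
/-- For every `b > 0` and `n ∈ ℕ`, the set
`E_{b,n} = {u ∈ E_b : |u|_b ≤ n}` is nowhere dense in the metric space `(F, d)`,
i.e. its closure has empty interior. -/
theorem Ebn_nowhere_dense (L κ₀ : ℝ) (hL : 0 < L) (hκ₀ : κ₀ = 2 * Real.pi / L)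
    (b : ℝ) (hb : 0 < b) (n : ℕ) :
    IsNowhereDense (EbnSet L κ₀ b n) := by
  have hκ : 0 < κ₀ := by
    rw [hκ₀]
    exact div_pos (by positivity) hL
  show interior (closure (EbnSet L κ₀ b n)) = ∅
  rw [Set.eq_empty_iff_forall_notMem]
  intro x hx
  obtain ⟨r, hr, hball⟩ := exists_ballF_subset hL.le hκ.le isOpen_interior x hx
  have hballE : ∀ y : Fs L κ₀, dF L κ₀ x y < r → y ∈ closure (EbnSet L κ₀ b n) :=
    fun y hy => interior_subset (hball hy)
  obtain ⟨A, hA⟩ := exists_pow_lt_of_lt_one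
    (by linarith : (0:ℝ) < r / 2) (by norm_num : (1/2 : ℝ) < 1)
  set M := Real.sqrt (κ₀ ^ (2 * (A+1)) *
    Real.exp (2 * ((A+1 : ℕ) : ℝ) ^ 2 / b) * (n : ℝ) ^ 2) with hMdef
  set C := M + nA L κ₀ x.1 (A+1) + 1 with hCdef
  have hMnonneg : 0 ≤ M := Real.sqrt_nonneg _
  have hnAx := nA_nonneg L κ₀ x.1 (A+1)
  have hCpos : 0 < C := by rw [hCdef]; linarith
  obtain ⟨N, hNgt⟩ := exists_nat_gt (max (1/κ₀) (4 * C / (r * κ₀)))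
  have hN1 : 1/κ₀ < (N : ℝ) := lt_of_le_of_lt (le_max_left _ _) hNgt
  have hN2 : 4 * C / (r * κ₀) < (N : ℝ) := lt_of_le_of_lt (le_max_right _ _) hNgt
  have hNr0 : (0:ℝ) < N := lt_trans (by positivity) hN1
  have hNpos : 1 ≤ N := by
    have : 0 < N := by exact_mod_cast hNr0
    omega
  have hκN : 1 ≤ κ₀ * (N : ℝ) := by
    rw [div_lt_iff₀ hκ] at hN1
    nlinarith
  have hκN0 : 0 < κ₀ * (N : ℝ) := lt_of_lt_of_le one_pos hκN
  have hs2 : (0:ℝ) < Real.sqrt 2 := Real.sqrt_pos.mpr (by norm_num)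
  have hpowpos : 0 < (κ₀ * (N : ℝ)) ^ A := pow_pos hκN0 A
  set ε := r / (4 * Real.sqrt 2 * L * (κ₀ * (N : ℝ)) ^ A) with hεdef
  have hε : 0 < ε := div_pos hr (by positivity)
  have htA : L * (Real.sqrt 2 * ((κ₀ * (N : ℝ)) ^ A * ε)) = r / 4 := by
    rw [hεdef]
    field_simp
  have htA1 : L * (Real.sqrt 2 * ((κ₀ * (N : ℝ)) ^ (A+1) * ε)) =
      r / 4 * (κ₀ * (N : ℝ)) := by
    rw [hεdef, pow_succ]
    field_simp
  have hvH : InH (fun k => x.1 k + eMode ε N k) := InH_add_eMode x.2.1 ε N hNpos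
  have hvS : ∀ α, SummableA κ₀ (fun k => x.1 k + eMode ε N k) α :=
    fun α => SummableA_add_finmod (x.2.2 α) _ _ eMode_off
  set v : Fs L κ₀ := ⟨fun k => x.1 k + eMode ε N k, hvH, hvS⟩ with hvdef
  have hxv : ∀ k, ‖x.1 k - v.1 k‖ = ‖eMode ε N k‖ := fun k => by
    show ‖x.1 k - (x.1 k + eMode ε N k)‖ = _
    rw [sub_add_cancel_left, norm_neg]
  have hnxv : ∀ β, nA L κ₀ (fun k => x.1 k - v.1 k) β =
      L * (Real.sqrt 2 * ((κ₀ * (N : ℝ)) ^ β * ε)) :=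
    fun β => nA_eMode hL.le hκ.le ε hε.le N hNpos β _ hxv
  -- d(x, v) < r
  have hdxv : dF L κ₀ x v < r := by
    have hle := dF_le_head_tail L κ₀ x v A (r/4) (by linarith) ?_
    · linarith
    · intro β hβ
      rw [hnxv (β + 1), ← htA]
      have hpw : (κ₀ * (N : ℝ)) ^ (β + 1) ≤ (κ₀ * (N : ℝ)) ^ A :=
        pow_le_pow_right₀ hκN hβ
      have := mul_le_mul_of_nonneg_right hpw hε.le
      nlinarith [mul_nonneg hL.le hs2.le]
  have hvclos : v ∈ closure (EbnSet L κ₀ b n) := hballE v hdxv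
  -- nA v (A+1) is big
  have hnAe : nA L κ₀ (eMode ε N) (A+1) =
      L * (Real.sqrt 2 * ((κ₀ * (N : ℝ)) ^ (A+1) * ε)) :=
    nA_eMode hL.le hκ.le ε hε.le N hNpos (A+1) _ (fun k => rfl)
  have hSumNegx : SummableA κ₀ (fun k => -x.1 k) (A+1) :=
    (x.2.2 (A+1)).congr fun k => by rw [norm_neg]
  have hnANegx : nA L κ₀ (fun k => -x.1 k) (A+1) = nA L κ₀ x.1 (A+1) := by
    simp only [nA, sqA, norm_neg]
  have hle1 : L * (Real.sqrt 2 * ((κ₀ * (N : ℝ)) ^ (A+1) * ε)) ≤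
      nA L κ₀ v.1 (A+1) + nA L κ₀ x.1 (A+1) := by
    rw [← hnAe, ← hnANegx]
    have heq : nA L κ₀ (eMode ε N) (A+1) =
        nA L κ₀ (fun k => v.1 k + (-x.1 k)) (A+1) := by
      congr 1
      exact funext fun k => by
        show eMode ε N k = (x.1 k + eMode ε N k) + -x.1 k
        abel
    rw [heq]
    exact nA_add_le hL.le hκ.le _ _ (A+1) (v.2.2 (A+1)) hSumNegx
  have hbig : r / 4 * (κ₀ * (N : ℝ)) > C := by
    have h4 : 4 * C < (N : ℝ) * (r * κ₀) := (div_lt_iff₀ (by positivity)).mp hN2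
    nlinarith
  have hvbig : nA L κ₀ v.1 (A+1) > M + 1 := by
    rw [htA1] at hle1
    rw [hCdef] at hbig
    linarith
  -- small ball around v misses EbnSet
  set ρ : ℝ := 1 / 2 ^ (A+2) with hρdef
  have hρpos : 0 < ρ := by rw [hρdef]; positivity
  have hvmem : v ∈ {y : Fs L κ₀ | dF L κ₀ v y < ρ} := by
    show dF L κ₀ v v < ρ
    rw [dF_self]
    exact hρpos
  obtain ⟨w, hwb, hwE⟩ := mem_closure_iff.mp hvclos _ (isOpen_ballF L κ₀ v ρ) hvmem
  have hwball : dF L κ₀ v w < ρ := hwb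
  have hwM : nA L κ₀ w.1 (A+1) ≤ M := nA_le_of_mem_Ebn hL.le hκ.le hb hwE (A+1)
  have hvw : nA L κ₀ v.1 (A+1) ≤
      nA L κ₀ (fun k => v.1 k - w.1 k) (A+1) + nA L κ₀ w.1 (A+1) := by
    have heq : nA L κ₀ v.1 (A+1) =
        nA L κ₀ (fun k => (v.1 k - w.1 k) + w.1 k) (A+1) := by
      congr 1
      exact funext fun k => (sub_add_cancel _ _).symm
    rw [heq]
    exact nA_add_le hL.le hκ.le _ _ _
      (SummableA_sub hκ.le (v.2.2 _) (w.2.2 _)) (w.2.2 _)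
  have hgt1 : 1 < nA L κ₀ (fun k => v.1 k - w.1 k) (A+1) := by linarith
  have hlow := dF_ge_term L κ₀ v w A
  have hnn := nA_nonneg L κ₀ (fun k => v.1 k - w.1 k) (A+1)
  have hhalf : (1/2 : ℝ) ≤ nA L κ₀ (fun k => v.1 k - w.1 k) (A + 1) /
      (1 + nA L κ₀ (fun k => v.1 k - w.1 k) (A + 1)) := by
    rw [le_div_iff₀ (by linarith)]
    linarith
  have hρle : ρ ≤ dF L κ₀ v w := by
    have h2 : ρ = (1 / 2 ^ (A + 1) : ℝ) * (1/2) := by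
      rw [hρdef, pow_succ]
      ring
    have hstep : ρ ≤ (1 / 2 ^ (A + 1) : ℝ) *
        (nA L κ₀ (fun k => v.1 k - w.1 k) (A + 1) /
          (1 + nA L κ₀ (fun k => v.1 k - w.1 k) (A + 1))) := by
      rw [h2]
      exact mul_le_mul_of_nonneg_left hhalf (by positivity)
    linarith
  linarith
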